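/- arXiv:1910.06665 — 2 statements merged into one kernel-verified Lean document; each statement's English description precedes it below -/
import Mathlib

section
/- Let M = (E,*,cx) be a finite oriented matroid and 𝔗 its set of topes. Then (E,*,𝔗) is an acycloid. Moreover, M is an oriented geometry (i.e. finite, with no loops, and all singletons closed) if and only if (E,*,𝔗) is a simple acycloid (all parallelism classes are singletons). -/
/-- An oriented matroid: a ground set `E` with a fixed-point-free involution `star`
and a finitary closure operator `cx` satisfying axioms (M4)-(M6). -/
structure OMatroid (E : Type*) where
  star : E → E
  cx : Set E → Set E
  star_star : ∀ x, star (star x) = x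
  star_ne : ∀ x, star x ≠ x
  subset_cx : ∀ A : Set E, A ⊆ cx A
  cx_mono : ∀ ⦃A B : Set E⦄, A ⊆ B → cx A ⊆ cx B
  cx_cx : ∀ A : Set E, cx (cx A) = cx A
  finitary : ∀ (A : Set E) (x : E), x ∈ cx A → ∃ B ⊆ A, B.Finite ∧ x ∈ cx B
  cx_star : ∀ A : Set E, cx (star '' A) = star '' cx A
  M5 : ∀ (A : Set E) (x : E), x ∈ cx (A ∪ {star x}) → x ∈ cx A
  M6 : ∀ (A : Set E) (x y : E), x ∈ cx (A ∪ {star y}) → x ∉ cx A →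
        y ∈ cx ((A \ {y}) ∪ {star x})

namespace OMatroid

variable {E : Type*} (M : OMatroid E)

/-- A circuit: a minimal nonempty subset `C` with `C* ⊆ cx C`. -/
def IsCircuit (C : Set E) : Prop :=
  C.Nonempty ∧ M.star '' C ⊆ M.cx C ∧
    ∀ D ⊆ C, D.Nonempty → M.star '' D ⊆ M.cx D → D = C

/-- The set of loops. -/
def loops : Set E := M.cx ∅

def IsClosed (F : Set E) : Prop := M.cx F = F

/-- A sharp: a closed set `F` with `F ∩ F* = L`. -/
def IsSharp (F : Set E) : Prop := M.IsClosed F ∧ F ∩ M.star '' F = M.loops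

/-- A hemispace: a closed set `H` with `H ∪ H* = E` and `H ∩ H* = L`. -/
def IsHemispace (H : Set E) : Prop :=
  M.IsClosed H ∧ H ∪ M.star '' H = Set.univ ∧ H ∩ M.star '' H = M.loops

end OMatroid

section Acycloid

variable {E : Type*}

/-- `(E, star, T)` is a preacycloid: `star` is a fixed-point-free involution, each
tope `H ∈ T` satisfies `H ∩ H* = ∅` and `H ∪ H* = E \ L` (where `L = E \ ⋃ T`), and
`T` is `*`-stable. -/
def IsPreacycloid (star : E → E) (T : Set (Set E)) : Prop :=
  (∀ x, star (star x) = x) ∧ (∀ x, star x ≠ x) ∧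
  (∀ H ∈ T, H ∩ star '' H = ∅ ∧ H ∪ star '' H = ⋃₀ T) ∧
  (∀ H ∈ T, star '' H ∈ T)

/-- Two elements are parallel if they lie in exactly the same topes. -/
def AcycParallel (T : Set (Set E)) (e f : E) : Prop := ∀ H ∈ T, (e ∈ H ↔ f ∈ H)

/-- The parallelism class of an element. -/
def pClass (T : Set (Set E)) (e : E) : Set E := {f | AcycParallel T e f}

/-- An acycloid: a preacycloid with at least one tope satisfying the exchange axiom (A4). -/
def IsAcycloid (star : E → E) (T : Set (Set E)) : Prop :=
  IsPreacycloid star T ∧ T.Nonempty ∧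
  ∀ H₁ ∈ T, ∀ H₂ ∈ T, H₁ ≠ H₂ →
    ∃ e ∈ H₁ \ H₂, (H₁ \ pClass T e) ∪ star '' pClass T e ∈ T

end Acycloid

/-- The set of topes of an oriented matroid: sets `H \ L` for `H` a hemispace. -/
def OMatroid.topes {E : Type*} (M : OMatroid E) : Set (Set E) :=
  {A | ∃ H : Set E, M.IsHemispace H ∧ A = H \ M.loops}

namespace OMatroid

variable {E : Type*} (M : OMatroid E)

lemma mem_star_image {A : Set E} {x : E} : x ∈ M.star '' A ↔ M.star x ∈ A := by
  constructor
  · rintro ⟨a, ha, rfl⟩; rwa [M.star_star]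
  · intro h; exact ⟨M.star x, h, M.star_star x⟩

lemma star_image_star_image (A : Set E) : M.star '' (M.star '' A) = A := by
  ext x; rw [mem_star_image, mem_star_image, M.star_star]

lemma star_injective : Function.Injective M.star :=
  Function.LeftInverse.injective M.star_star

lemma loops_star : M.star '' M.loops = M.loops := by
  have h := M.cx_star ∅
  rw [Set.image_empty] at h
  exact h.symm

lemma mem_loops_star {x : E} (hx : x ∈ M.loops) : M.star x ∈ M.loops := by
  rw [← M.loops_star]; exact ⟨x, hx, rfl⟩

lemma loops_subset_cx (A : Set E) : M.loops ⊆ M.cx A :=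
  M.cx_mono (Set.empty_subset A)

lemma cx_subset_cx {A B : Set E} (h : A ⊆ M.cx B) : M.cx A ⊆ M.cx B := by
  have := M.cx_mono h
  rwa [M.cx_cx] at this

lemma cx_absorb {A B : Set E} (h : A ⊆ M.cx B) : M.cx (B ∪ A) = M.cx B :=
  subset_antisymm (M.cx_subset_cx (Set.union_subset (M.subset_cx B) h))
    (M.cx_mono Set.subset_union_left)

lemma cx_star_singleton (e : E) : M.cx {M.star e} = M.star '' M.cx {e} := by
  rw [← M.cx_star, Set.image_singleton]

lemma loops_subset_closed {F : Set E} (h : M.IsClosed F) : M.loops ⊆ F := by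
  have := M.cx_mono (Set.empty_subset F)
  rwa [h] at this

lemma loops_closed : M.IsClosed M.loops := M.cx_cx ∅

lemma IsSharp.elim {F : Set E} (h : M.IsSharp F) {y : E} (hy : y ∈ F)
    (hy' : M.star y ∈ F) : y ∈ M.loops := by
  rw [← h.2]; exact ⟨hy, M.mem_star_image.mpr hy'⟩

lemma isSharp_of {F : Set E} (hc : M.IsClosed F)
    (h : ∀ y ∈ F, M.star y ∈ F → y ∈ M.loops) : M.IsSharp F := by
  refine ⟨hc, subset_antisymm ?_ ?_⟩
  · rintro y ⟨hy, hy'⟩; exact h y hy (M.mem_star_image.mp hy')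
  · intro y hy
    exact ⟨M.loops_subset_closed hc hy, M.mem_star_image.mpr
      (M.loops_subset_closed hc (M.mem_loops_star hy))⟩

lemma loops_sharp : M.IsSharp M.loops := by
  refine M.isSharp_of M.loops_closed fun y hy _ => hy

end OMatroid

namespace OMatroid

variable {E : Type*} (M : OMatroid E)

/-- Lemma A: adding a point outside `F ∪ F*` to a sharp keeps it sharp. -/
lemma sharp_insert {F : Set E} (hF : M.IsSharp F) {x : E} (hx : x ∉ F)
    (hx' : M.star x ∉ F) : M.IsSharp (M.cx (F ∪ {x})) := by
  have hFc : M.cx F = F := hF.1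
  refine M.isSharp_of (M.cx_cx _) fun y hy hy' => ?_
  by_cases hyF : y ∈ F
  · by_cases hy'F : M.star y ∈ F
    · exact hF.elim M hyF hy'F
    · exfalso
      have h6 := M.M6 F (M.star y) (M.star x)
        (by rwa [M.star_star]) (by rwa [hFc])
      rw [M.star_star, Set.diff_singleton_eq_self hx',
        M.cx_absorb (Set.singleton_subset_iff.mpr (M.subset_cx F hyF)), hFc] at h6
      exact hx' h6
  · by_cases hy'F : M.star y ∈ F
    · exfalso
      have h6 := M.M6 F y (M.star x) (by rwa [M.star_star]) (by rwa [hFc])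
      rw [Set.diff_singleton_eq_self hx',
        M.cx_absorb (Set.singleton_subset_iff.mpr (M.subset_cx F hy'F)), hFc] at h6
      exact hx' h6
    · exfalso
      have h6 := M.M6 F (M.star y) (M.star x)
        (by rwa [M.star_star]) (by rwa [hFc])
      rw [M.star_star, Set.diff_singleton_eq_self hx'] at h6
      -- h6 : star x ∈ cx (F ∪ {y}), and y ∈ cx (F ∪ {x})
      have hsub : F ∪ {y} ⊆ M.cx (F ∪ {x}) :=
        Set.union_subset (Set.subset_union_left.trans (M.subset_cx _))
          (Set.singleton_subset_iff.mpr hy)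
      have h7 : M.star x ∈ M.cx (F ∪ {x}) := M.cx_subset_cx hsub h6
      have h8 := M.M5 F (M.star x) (by rwa [M.star_star])
      rw [hFc] at h8
      exact hx' h8

lemma IsHemispace.closed {H : Set E} (h : M.IsHemispace H) : M.cx H = H := h.1

lemma IsHemispace.loops_subset {H : Set E} (h : M.IsHemispace H) :
    M.loops ⊆ H := M.loops_subset_closed h.1

lemma IsHemispace.elim {H : Set E} (h : M.IsHemispace H) {y : E} (hy : y ∈ H)
    (hy' : M.star y ∈ H) : y ∈ M.loops := by
  rw [← h.2.2]; exact ⟨hy, M.mem_star_image.mpr hy'⟩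

lemma IsHemispace.cover {H : Set E} (h : M.IsHemispace H) {y : E} (hy : y ∉ H) :
    M.star y ∈ H := by
  have : y ∈ H ∪ M.star '' H := h.2.1 ▸ Set.mem_univ y
  rcases this with h' | h'
  · exact absurd h' hy
  · exact M.mem_star_image.mp h'

lemma IsHemispace.sharp {H : Set E} (h : M.IsHemispace H) : M.IsSharp H :=
  ⟨h.1, h.2.2⟩

lemma IsHemispace.star {H : Set E} (h : M.IsHemispace H) :
    M.IsHemispace (M.star '' H) := by
  refine ⟨?_, ?_, ?_⟩
  · show M.cx (M.star '' H) = M.star '' H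
    rw [M.cx_star, h.1]
  · rw [M.star_image_star_image, Set.union_comm]; exact h.2.1
  · rw [M.star_image_star_image, Set.inter_comm]; exact h.2.2

/-- Every sharp extends to a hemispace. -/
lemma exists_hemispace_of_sharp [Finite E] {F : Set E} (hF : M.IsSharp F) :
    ∃ H, M.IsHemispace H ∧ F ⊆ H := by
  suffices h : ∀ (n : ℕ) (F : Set E), M.IsSharp F →
      (F ∪ M.star '' F)ᶜ.ncard ≤ n → ∃ H, M.IsHemispace H ∧ F ⊆ H from
    h _ F hF le_rfl
  intro n
  induction n with
  | zero =>
    intro F hF hcard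
    have h0 : (F ∪ M.star '' F)ᶜ = ∅ := by
      rw [← Set.ncard_eq_zero (Set.toFinite _)]; omega
    have hu : F ∪ M.star '' F = Set.univ := Set.compl_empty_iff.mp h0
    exact ⟨F, ⟨hF.1, hu, hF.2⟩, subset_refl F⟩
  | succ n ih =>
    intro F hF hcard
    by_cases hu : F ∪ M.star '' F = Set.univ
    · exact ⟨F, ⟨hF.1, hu, hF.2⟩, subset_refl F⟩
    · obtain ⟨x, hx⟩ : ((F ∪ M.star '' F)ᶜ).Nonempty := by
        rw [Set.nonempty_compl]; exact hu
      have hx1 : x ∉ F := fun h => hx (Or.inl h)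
      have hx2 : M.star x ∉ F := fun h => hx (Or.inr (M.mem_star_image.mpr h))
      have hsharp := M.sharp_insert hF hx1 hx2
      have hsub : F ⊆ M.cx (F ∪ {x}) :=
        Set.subset_union_left.trans (M.subset_cx _)
      have hss : (M.cx (F ∪ {x}) ∪ M.star '' M.cx (F ∪ {x}))ᶜ
          ⊂ (F ∪ M.star '' F)ᶜ := by
        constructor
        · apply Set.compl_subset_compl.mpr
          exact Set.union_subset_union hsub (Set.image_mono hsub)
        · intro hcon
          have : x ∈ (M.cx (F ∪ {x}) ∪ M.star '' M.cx (F ∪ {x}))ᶜ := hcon hx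
          exact this (Or.inl (M.subset_cx _ (Or.inr rfl)))
      have hlt := Set.ncard_lt_ncard hss (Set.toFinite _)
      obtain ⟨H, hH, hFH⟩ := ih (M.cx (F ∪ {x})) hsharp (by omega)
      exact ⟨H, hH, hsub.trans hFH⟩

end OMatroid

namespace OMatroid

variable {E : Type*} (M : OMatroid E)

lemma cx_singleton_sharp {e : E} (he : e ∉ M.loops) : M.IsSharp (M.cx {e}) := by
  have h := M.sharp_insert M.loops_sharp he
    (fun h => he (by have := M.mem_loops_star h; rwa [M.star_star] at this))
  rwa [Set.union_comm, M.cx_absorb (M.loops_subset_cx {e})] at h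

lemma mem_cx_singleton_symm {e f : E} (hf : f ∈ M.cx {e}) (hfL : f ∉ M.loops) :
    e ∈ M.cx {f} := by
  have h6 := M.M6 ∅ f (M.star e)
    (by rw [M.star_star, Set.empty_union]; exact hf) hfL
  rw [Set.empty_diff, Set.empty_union, M.cx_star_singleton] at h6
  have := M.mem_star_image.mp h6
  rwa [M.star_star] at this

lemma exists_hemispace_mem [Finite E] {e : E} (he : e ∉ M.loops) :
    ∃ H, M.IsHemispace H ∧ e ∈ H := by
  obtain ⟨H, hH, hsub⟩ := M.exists_hemispace_of_sharp (M.cx_singleton_sharp he)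
  exact ⟨H, hH, hsub (M.subset_cx _ rfl)⟩

/-- Separation: a tope containing `e` but not `f`. -/
lemma exists_hemispace_sep [Finite E] {e f : E} (he : e ∉ M.loops)
    (hf : f ∉ M.loops) (h1 : f ∉ M.cx {e}) (h2 : M.star f ∉ M.cx {e}) :
    ∃ H, M.IsHemispace H ∧ e ∈ H ∧ f ∉ H := by
  have hsharp := M.sharp_insert (M.cx_singleton_sharp he) h2
    (by rwa [M.star_star])
  obtain ⟨H, hH, hsub⟩ := M.exists_hemispace_of_sharp hsharp
  have heH : e ∈ H := hsub (M.subset_cx _ (Or.inl (M.subset_cx _ rfl)))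
  have hsfH : M.star f ∈ H := hsub (M.subset_cx _ (Or.inr rfl))
  exact ⟨H, hH, heH, fun hfH => hf (hH.elim M hfH hsfH)⟩

lemma pClass_nonloop [Finite E] {e : E} (he : e ∉ M.loops) :
    pClass M.topes e = M.cx {e} \ M.loops := by
  ext f
  simp only [pClass, AcycParallel, Set.mem_setOf_eq, Set.mem_diff]
  constructor
  · intro hf
    obtain ⟨H₀, hH₀, heH₀⟩ := M.exists_hemispace_mem he
    have hf0 : f ∈ H₀ \ M.loops :=
      (hf (H₀ \ M.loops) ⟨H₀, hH₀, rfl⟩).mp ⟨heH₀, he⟩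
    refine ⟨?_, hf0.2⟩
    by_contra hfc
    by_cases hfc' : M.star f ∈ M.cx {e}
    · have : M.star f ∈ H₀ := by
        have : M.cx {e} ⊆ H₀ := by
          rw [← hH₀.closed M]
          exact M.cx_mono (Set.singleton_subset_iff.mpr heH₀)
        exact this hfc'
      exact hf0.2 (hH₀.elim M hf0.1 this)
    · obtain ⟨H, hH, heH, hfH⟩ := M.exists_hemispace_sep he hf0.2 hfc hfc'
      have := (hf (H \ M.loops) ⟨H, hH, rfl⟩).mp ⟨heH, he⟩
      exact hfH this.1
  · rintro ⟨hfc, hfL⟩ T ⟨H, hH, rfl⟩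
    have hcl : M.cx H = H := hH.closed M
    constructor
    · rintro ⟨heH, -⟩
      refine ⟨?_, hfL⟩
      rw [← hcl]; exact M.cx_mono (Set.singleton_subset_iff.mpr heH) hfc
    · rintro ⟨hfH, -⟩
      refine ⟨?_, he⟩
      rw [← hcl]
      exact M.cx_mono (Set.singleton_subset_iff.mpr hfH)
        (M.mem_cx_singleton_symm hfc hfL)

lemma pClass_loop [Finite E] {e : E} (he : e ∈ M.loops) :
    pClass M.topes e = M.loops := by
  ext f
  simp only [pClass, AcycParallel, Set.mem_setOf_eq]
  constructor
  · intro hf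
    by_contra hfL
    obtain ⟨H, hH, hfH⟩ := M.exists_hemispace_mem hfL
    have := (hf (H \ M.loops) ⟨H, hH, rfl⟩).mpr ⟨hfH, hfL⟩
    exact this.2 he
  · rintro hfL T ⟨H, hH, rfl⟩
    constructor
    · rintro ⟨-, heL⟩; exact absurd he heL
    · rintro ⟨-, h⟩; exact absurd hfL h

end OMatroid

namespace OMatroid

variable {E : Type*} (M : OMatroid E)

/-- Lemma C: stripping a sharp `F` from a closure membership. -/
lemma strip_lemma [Finite E] {F : Set E} {e f : E} (hFc : M.cx F = F)
    (hFs : ∀ y ∈ F, M.star y ∈ F → y ∈ M.loops)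
    (heF : e ∉ F) (heF' : M.star e ∉ F)
    (hsf : M.star f ∈ M.cx (F ∪ {M.star e})) :
    ∀ (n : ℕ) (B : Set E), B ⊆ F → B.ncard ≤ n → f ∈ M.cx (B ∪ {e}) →
      f ∈ M.cx {e} := by
  intro n
  induction n with
  | zero =>
    intro B hBF hB hf
    have hB0 : B = ∅ := by
      rw [← Set.ncard_eq_zero (Set.toFinite B)]; omega
    rwa [hB0, Set.empty_union] at hf
  | succ n ih =>
    intro B hBF hB hf
    rcases Set.eq_empty_or_nonempty B with hB0 | ⟨g, hg⟩
    · rwa [hB0, Set.empty_union] at hf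
    have hcard : (B \ {g}).ncard ≤ n := by
      have := Set.ncard_diff_singleton_lt_of_mem hg (Set.toFinite B)
      omega
    have hgF : g ∈ F := hBF hg
    by_cases hgL : g ∈ M.loops
    · refine ih (B \ {g}) (Set.diff_subset.trans hBF) hcard ?_
      refine M.cx_subset_cx ?_ hf
      rintro x (hx | hx)
      · by_cases hxg : x = g
        · subst hxg; exact M.loops_subset_cx _ hgL
        · exact M.subset_cx _ (Or.inl ⟨hx, hxg⟩)
      · exact M.subset_cx _ (Or.inr hx)
    by_cases hg2 : f ∈ M.cx ((B \ {g}) ∪ {e})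
    · exact ih (B \ {g}) (Set.diff_subset.trans hBF) hcard hg2
    exfalso
    set A' := (B \ {g}) ∪ {e} with hA'
    have hfA' : f ∈ M.cx (A' ∪ {M.star (M.star g)}) := by
      rw [M.star_star]
      refine M.cx_mono ?_ hf
      rintro x (hx | hx)
      · by_cases hxg : x = g
        · exact Or.inr (hxg ▸ rfl)
        · exact Or.inl (Or.inl ⟨hx, hxg⟩)
      · exact Or.inl (Or.inr hx)
    have h6 := M.M6 A' f (M.star g) hfA' hg2
    have hsgA' : M.star g ∉ A' := by
      rintro (⟨hx, -⟩ | hx)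
      · exact hgL (hFs g hgF (hBF hx))
      · have : g = M.star e := by
          have := congrArg M.star hx
          rwa [M.star_star] at this
        exact heF' (this ▸ hgF)
    rw [Set.diff_singleton_eq_self hsgA'] at h6
    set D := (F ∪ {e}) ∪ {M.star e} with hD
    have hgD : M.star g ∈ M.cx D := by
      refine M.cx_subset_cx ?_ h6
      rintro x (hx | hx)
      · rcases hx with hx | hx
        · exact M.subset_cx _ (Or.inl (Or.inl (hBF hx.1)))
        · exact M.subset_cx _ (Or.inl (Or.inr hx))
      · -- x = star f
        have : M.cx (F ∪ {M.star e}) ⊆ M.cx D :=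
          M.cx_mono (Set.union_subset_union_left _ Set.subset_union_left)
        exact hx ▸ this hsf
    have hsgF : M.star g ∉ M.cx F := by
      rw [hFc]; exact fun h => hgL (hFs g hgF h)
    by_cases h3 : M.star g ∈ M.cx (F ∪ {e})
    · have h7 := M.M6 F (M.star g) (M.star e) (by rwa [M.star_star]) hsgF
      rw [M.star_star, Set.diff_singleton_eq_self heF',
        M.cx_absorb (Set.singleton_subset_iff.mpr (M.subset_cx F hgF)), hFc] at h7
      exact heF' h7
    · have h7 := M.M6 (F ∪ {e}) (M.star g) e hgD h3
      rw [M.star_star] at h7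
      have h8 : e ∈ M.cx (F ∪ {g}) := by
        refine M.cx_mono ?_ h7
        refine Set.union_subset_union_left _ ?_
        rintro x ⟨hx | hx, hxe⟩
        · exact hx
        · exact absurd hx hxe
      rw [M.cx_absorb (Set.singleton_subset_iff.mpr (M.subset_cx F hgF)), hFc] at h8
      exact heF h8

end OMatroid

namespace OMatroid

variable {E : Type*} (M : OMatroid E)

lemma hemispace_diff_nonempty {H₁ H₂ : Set E} (h1 : M.IsHemispace H₁)
    (h2 : M.IsHemispace H₂) (hne : H₁ ≠ H₂) : (H₁ \ H₂).Nonempty := by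
  rw [Set.nonempty_iff_ne_empty]
  intro hcon
  have hsub : H₁ ⊆ H₂ := by
    rw [Set.diff_eq_empty] at hcon; exact hcon
  obtain ⟨x, hx2, hx1⟩ := Set.exists_of_ssubset ⟨hsub, fun h => hne
    (subset_antisymm hsub h)⟩
  have hsx : M.star x ∈ H₁ := h1.cover M hx1
  have : x ∈ M.loops := by
    have := h2.elim M hx2 (hsub hsx)
    exact this
  exact hx1 (h1.loops_subset M this)

/-- The key flip lemma (exchange axiom at the hemispace level). -/
lemma flip_lemma [Finite E] : ∀ (n : ℕ) (H₁ H₂ : Set E), M.IsHemispace H₁ →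
    M.IsHemispace H₂ → H₁ ≠ H₂ → (H₁ \ H₂).ncard ≤ n →
    ∃ e, e ∈ H₁ ∧ e ∉ H₂ ∧ e ∉ M.loops ∧
      M.IsHemispace ((H₁ \ M.cx {e}) ∪ M.cx {M.star e}) := by
  intro n
  induction n with
  | zero =>
    intro H₁ H₂ h1 h2 hne hcard
    exfalso
    have := M.hemispace_diff_nonempty h1 h2 hne
    have := Set.ncard_pos (Set.toFinite _) |>.mpr this
    omega
  | succ n ih =>
    intro H₁ H₂ h1 h2 hne hcard
    by_cases hex : ∃ H₄, M.IsHemispace H₄ ∧ H₁ ∩ H₂ ⊆ H₄ ∧ H₄ ≠ H₁ ∧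
        ¬(H₁ ∩ H₄ ⊆ H₁ ∩ H₂)
    · obtain ⟨H₄, h4, hsub, hne4, hnsub⟩ := hex
      have hss : H₁ \ H₄ ⊂ H₁ \ H₂ := by
        constructor
        · rintro x ⟨hx1, hx4⟩
          exact ⟨hx1, fun hx2 => hx4 (hsub ⟨hx1, hx2⟩)⟩
        · intro hcon
          obtain ⟨y, hy14, hy12⟩ := Set.not_subset.mp hnsub
          have hy2 : y ∉ H₂ := fun h => hy12 ⟨hy14.1, h⟩
          have := hcon ⟨hy14.1, hy2⟩
          exact this.2 hy14.2
      have hlt := Set.ncard_lt_ncard hss (Set.toFinite _)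
      obtain ⟨e, he1, he4, heL, hflip⟩ := ih H₁ H₄ h1 h4
        (fun h => hne4 h.symm) (by omega)
      exact ⟨e, he1, fun heH₂ => he4 (hsub ⟨he1, heH₂⟩), heL, hflip⟩
    · push_neg at hex
      have hstar : ∀ H₄, M.IsHemispace H₄ → H₁ ∩ H₂ ⊆ H₄ → H₄ ≠ H₁ →
          H₁ ∩ H₄ ⊆ H₁ ∩ H₂ := fun H₄ a b c => hex H₄ a b c
      set F := H₁ ∩ H₂ with hF
      have hFc : M.cx F = F := by
        apply subset_antisymm
        · intro x hx
          exact ⟨by rw [← h1.closed M]; exact M.cx_mono Set.inter_subset_left hx,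
            by rw [← h2.closed M]; exact M.cx_mono Set.inter_subset_right hx⟩
        · exact M.subset_cx F
      have hFs : ∀ y ∈ F, M.star y ∈ F → y ∈ M.loops :=
        fun y hy hy' => h1.elim M hy.1 hy'.1
      have hFsharp : M.IsSharp F := M.isSharp_of hFc hFs
      obtain ⟨e, he1, he2⟩ := M.hemispace_diff_nonempty h1 h2 hne
      have heL : e ∉ M.loops := fun h => he2 (h2.loops_subset M h)
      have hse1 : M.star e ∉ H₁ := fun h => heL (h1.elim M he1 h)
      have hse2 : M.star e ∈ H₂ := h2.cover M he2
      have heF : e ∉ F := fun h => he2 h.2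
      have hseF : M.star e ∉ F := fun h => hse1 h.1
      have hGsharp : M.IsSharp (M.cx (F ∪ {M.star e})) :=
        M.sharp_insert hFsharp hseF (by rwa [M.star_star])
      -- the key claim: everything in H₁ \ H₂ is in cx {e}
      have hkey : ∀ f, f ∈ H₁ → f ∉ H₂ → f ∈ M.cx {e} := by
        intro f hf1 hf2
        have hfL : f ∉ M.loops := fun h => hf2 (h2.loops_subset M h)
        have hsf1 : M.star f ∉ H₁ := fun h => hfL (h1.elim M hf1 h)
        have hfF : f ∉ F := fun h => hf2 h.2
        have h1a : f ∉ M.cx (F ∪ {M.star e}) := by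
          intro hfG
          obtain ⟨H₄, hH₄, hGH₄⟩ := M.exists_hemispace_of_sharp hGsharp
          have hFH₄ : F ⊆ H₄ :=
            (Set.subset_union_left.trans (M.subset_cx _)).trans hGH₄
          have hne4 : H₄ ≠ H₁ := by
            intro h
            exact hse1 (h ▸ hGH₄ (M.subset_cx _ (Or.inr rfl)))
          exact hfF (hstar H₄ hH₄ hFH₄ hne4 ⟨hf1, hGH₄ hfG⟩)
        have h1b : M.star f ∈ M.cx (F ∪ {M.star e}) := by
          by_contra hns
          have hsharp2 := M.sharp_insert hGsharp h1a hns
          obtain ⟨H₄, hH₄, hGH₄⟩ := M.exists_hemispace_of_sharp hsharp2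
          have hsub1 : M.cx (F ∪ {M.star e}) ⊆ H₄ :=
            (Set.subset_union_left.trans (M.subset_cx _)).trans hGH₄
          have hFH₄ : F ⊆ H₄ :=
            (Set.subset_union_left.trans (M.subset_cx _)).trans hsub1
          have hne4 : H₄ ≠ H₁ := by
            intro h
            exact hse1 (h ▸ hsub1 (M.subset_cx _ (Or.inr rfl)))
          have hfH₄ : f ∈ H₄ := hGH₄ (M.subset_cx _ (Or.inr rfl))
          exact hfF (hstar H₄ hH₄ hFH₄ hne4 ⟨hf1, hfH₄⟩)
        have h2a : f ∈ M.cx (F ∪ {e}) := by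
          by_contra hfa
          have hsharp1 : M.IsSharp (M.cx (F ∪ {e})) :=
            M.sharp_insert hFsharp heF hseF
          have hsubH₁ : M.cx (F ∪ {e}) ⊆ H₁ := by
            rw [← h1.closed M]
            exact M.cx_mono (Set.union_subset Set.inter_subset_left
              (Set.singleton_subset_iff.mpr he1))
          have hsharp2 := M.sharp_insert hsharp1
            (fun h => hsf1 (hsubH₁ h)) (by rw [M.star_star]; exact hfa)
          obtain ⟨H₄, hH₄, hGH₄⟩ := M.exists_hemispace_of_sharp hsharp2
          have hsub1 : M.cx (F ∪ {e}) ⊆ H₄ :=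
            (Set.subset_union_left.trans (M.subset_cx _)).trans hGH₄
          have hFH₄ : F ⊆ H₄ :=
            (Set.subset_union_left.trans (M.subset_cx _)).trans hsub1
          have hsfH₄ : M.star f ∈ H₄ := hGH₄ (M.subset_cx _ (Or.inr rfl))
          have hne4 : H₄ ≠ H₁ := fun h => hsf1 (h ▸ hsfH₄)
          have heH₄ : e ∈ H₄ := hsub1 (M.subset_cx _ (Or.inr rfl))
          exact heF (hstar H₄ hH₄ hFH₄ hne4 ⟨he1, heH₄⟩)
        exact M.strip_lemma hFc hFs heF hseF h1b F.ncard F (subset_refl F)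
          le_rfl h2a
      -- the flip equals H₂
      have hflip : (H₁ \ M.cx {e}) ∪ M.cx {M.star e} = H₂ := by
        apply subset_antisymm
        · apply Set.union_subset
          · rintro x ⟨hx1, hxc⟩
            by_contra hx2
            exact hxc (hkey x hx1 hx2)
          · rw [← h2.closed M]
            exact M.cx_mono (Set.singleton_subset_iff.mpr hse2)
        · intro x hx2
          by_cases hx1 : x ∈ H₁
          · by_cases hxc : x ∈ M.cx {e}
            · have hxL : x ∈ M.loops := by
                by_contra hxL
                have hex := M.mem_cx_singleton_symm hxc hxL
                have : e ∈ H₂ := by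
                  rw [← h2.closed M]
                  exact M.cx_mono (Set.singleton_subset_iff.mpr hx2) hex
                exact he2 this
              exact Or.inr (M.loops_subset_cx _ hxL)
            · exact Or.inl ⟨hx1, hxc⟩
          · have hsx1 : M.star x ∈ H₁ := h1.cover M hx1
            have hsx2 : M.star x ∉ H₂ := fun h =>
              hx1 (h1.loops_subset M (h2.elim M hx2 h))
            have := hkey (M.star x) hsx1 hsx2
            refine Or.inr ?_
            rw [M.cx_star_singleton]
            exact M.mem_star_image.mpr this
      exact ⟨e, he1, he2, heL, hflip ▸ h2⟩

end OMatroid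

namespace OMatroid

variable {E : Type*} (M : OMatroid E)

lemma topes_nonempty [Finite E] : M.topes.Nonempty := by
  obtain ⟨H, hH, -⟩ := M.exists_hemispace_of_sharp M.loops_sharp
  exact ⟨H \ M.loops, H, hH, rfl⟩

lemma sUnion_topes [Finite E] : ⋃₀ M.topes = M.loopsᶜ := by
  apply subset_antisymm
  · rintro x ⟨T, ⟨H, hH, rfl⟩, hx⟩
    exact hx.2
  · intro x hx
    obtain ⟨H, hH, hxH⟩ := M.exists_hemispace_mem hx
    exact ⟨H \ M.loops, ⟨H, hH, rfl⟩, hxH, hx⟩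

lemma star_image_tope {H : Set E} (hH : M.IsHemispace H) :
    M.star '' (H \ M.loops) = M.star '' H \ M.loops := by
  rw [Set.image_diff (M.star_injective), M.loops_star]

end OMatroid

theorem stmt_6' {E : Type*} [Finite E] (M : OMatroid E) :
    IsAcycloid M.star M.topes ∧
    ((M.loops = ∅ ∧ ∀ e : E, M.cx {e} = {e}) ↔ ∀ e : E, pClass M.topes e = {e}) := by
  constructor
  · refine ⟨⟨M.star_star, M.star_ne, ?_, ?_⟩, M.topes_nonempty, ?_⟩
    · rintro T ⟨H, hH, rfl⟩
      constructor
      · rw [Set.eq_empty_iff_forall_notMem]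
        rintro x ⟨hx1, hx2⟩
        have hsx := M.mem_star_image.mp hx2
        exact hx1.2 (hH.elim M hx1.1 hsx.1)
      · rw [M.sUnion_topes]
        ext x
        simp only [Set.mem_union, Set.mem_diff, Set.mem_compl_iff]
        constructor
        · rintro (⟨-, h⟩ | h)
          · exact h
          · intro hxL
            exact (M.mem_star_image.mp h).2 (M.mem_loops_star hxL)
        · intro hxL
          by_cases hxH : x ∈ H
          · exact Or.inl ⟨hxH, hxL⟩
          · refine Or.inr (M.mem_star_image.mpr ⟨hH.cover M hxH, ?_⟩)
            intro h
            have h2 := M.mem_loops_star h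
            rw [M.star_star] at h2
            exact hxL h2
    · rintro T ⟨H, hH, rfl⟩
      exact ⟨M.star '' H, hH.star M, (M.star_image_tope hH).symm ▸ rfl⟩
    · rintro T₁ ⟨H₁, hH₁, rfl⟩ T₂ ⟨H₂, hH₂, rfl⟩ hne
      have hne' : H₁ ≠ H₂ := fun h => hne (by rw [h])
      obtain ⟨e, he1, he2, heL, hflip⟩ := M.flip_lemma (H₁ \ H₂).ncard H₁ H₂
        hH₁ hH₂ hne' le_rfl
      refine ⟨e, ⟨⟨he1, heL⟩, fun h => he2 h.1⟩, ?_⟩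
      refine ⟨(H₁ \ M.cx {e}) ∪ M.cx {M.star e}, hflip, ?_⟩
      rw [M.pClass_nonloop heL, Set.image_diff M.star_injective, M.loops_star,
        ← M.cx_star_singleton]
      ext x
      simp only [Set.mem_union, Set.mem_diff]
      have hLe : x ∈ M.loops → x ∈ M.cx {e} := fun h => M.loops_subset_cx _ h
      have hLse : x ∈ M.loops → x ∈ M.cx {M.star e} :=
        fun h => M.loops_subset_cx _ h
      tauto
  · constructor
    · rintro ⟨hL, hcx⟩ e
      have heL : e ∉ M.loops := by rw [hL]; exact Set.notMem_empty e
      rw [M.pClass_nonloop heL, hL, Set.diff_empty, hcx]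
    · intro h
      have hL : M.loops = ∅ := by
        rw [Set.eq_empty_iff_forall_notMem]
        intro e heL
        have h1 : M.loops = {e} := by rw [← M.pClass_loop heL, h e]
        have h2 : M.star e ∈ M.loops := M.mem_loops_star heL
        rw [h1] at h2
        exact M.star_ne e h2
      refine ⟨hL, fun e => ?_⟩
      have heL : e ∉ M.loops := by rw [hL]; exact Set.notMem_empty e
      have := h e
      rwa [M.pClass_nonloop heL, hL, Set.diff_empty] at this
/-- the tope preacycloid of a finite oriented matroid is an acycloid, and
`M` is an oriented geometry (no loops and all singletons closed) iff this acycloid is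
simple (all parallelism classes are singletons). -/
theorem stmt_6 {E : Type*} [Finite E] (M : OMatroid E) :
    IsAcycloid M.star M.topes ∧
    ((M.loops = ∅ ∧ ∀ e : E, M.cx {e} = {e}) ↔ ∀ e : E, pClass M.topes e = {e}) := by
  exact stmt_6' M
end

section
/- Let R = (G,Φ,Φ⁺) be a faithful signed groupoid set. A quadruple (x,w,y,z) of morphisms is a square if and only if xw = yz, x ∨ y = xw, and x⁻¹ ∨ w = x⁻¹y, where the joins are taken in the weak order at the relevant objects (and these joins exist in this situation). -/
open CategoryTheory

universe u v

/-- A signed groupoid set: a groupoid `G` acting on a family of definitely involuted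
sets `R a` (`a ∈ Ob G`), with involution `neg`, positive parts `pos a`, and the action
commuting with the involution. -/
structure SGS (G : Type u) [Groupoid G] (R : G → Type v) where
  neg : ∀ {a : G}, R a → R a
  pos : ∀ a : G, Set (R a)
  act : ∀ {a b : G}, (b ⟶ a) → R b → R a
  neg_neg : ∀ {a : G} (x : R a), neg (neg x) = x
  pos_iff : ∀ {a : G} (x : R a), x ∈ pos a ↔ neg x ∉ pos a
  act_id : ∀ {a : G} (x : R a), act (𝟙 a) x = x
  act_comp : ∀ {a b c : G} (g : c ⟶ b) (f : b ⟶ a) (x : R c),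
      act f (act g x) = act (g ≫ f) x
  act_neg : ∀ {a b : G} (f : b ⟶ a) (x : R b), act f (neg x) = neg (act f x)

/-- The morphisms of `G` with codomain `a`. -/
abbrev SHoms (G : Type u) [Groupoid G] (a : G) : Type _ := Σ b : G, (b ⟶ a)

namespace SGS

variable {G : Type u} [Groupoid G] {R : G → Type v} (S : SGS G R)

/-- The inversion set of a morphism `f : b ⟶ a`: positive roots at `a` sent to
negative roots at `b` by `f⁻¹`. -/
def Phi {a b : G} (f : b ⟶ a) : Set (R a) :=
  {α | α ∈ S.pos a ∧ S.act (Groupoid.inv f) α ∉ S.pos b}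

/-- The inversion set of an element of `SHoms G a`. -/
def PhiS {a : G} (g : SHoms G a) : Set (R a) := S.Phi g.2

/-- `S` is faithful if only identity morphisms have empty inversion set. -/
def Faithful : Prop :=
  ∀ ⦃a b : G⦄ (f : b ⟶ a), S.Phi f = ∅ → ∃ h : b = a, f = eqToHom h

/-- `j` is an upper bound of `F` in the weak order at `a`. -/
def IsUB {a : G} (F : Set (SHoms G a)) (j : SHoms G a) : Prop :=
  ∀ g ∈ F, S.PhiS g ⊆ S.PhiS j

/-- `j` is a least upper bound of `F` in the weak order at `a`. -/
def IsLUBw {a : G} (F : Set (SHoms G a)) (j : SHoms G a) : Prop :=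
  S.IsUB F j ∧ ∀ k : SHoms G a, S.IsUB F k → S.PhiS j ⊆ S.PhiS k

/-- `S` is complete: the weak order at every object is a complete lattice
(equivalently, every family of morphisms with a common codomain has a join). -/
def Complete : Prop := ∀ (a : G) (F : Set (SHoms G a)), ∃ j : SHoms G a, S.IsLUBw F j

/-- `S` is finite: finitely many objects, morphisms and roots. -/
def FiniteSGS (_S : SGS G R) : Prop :=
  Finite G ∧ (∀ a b : G, Finite (a ⟶ b)) ∧ ∀ a : G, Finite (R a)

/-- A square `(x, w, y, z)`: a commuting square `xw = yz` with `x(Φ_w) = Φ_y`. -/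
def Square {a b c d : G} (x : b ⟶ d) (w : a ⟶ b) (y : c ⟶ d) (z : a ⟶ c) : Prop :=
  w ≫ x = z ≫ y ∧ S.act x '' S.Phi w = S.Phi y

/-- The positive real roots at `a`: the union of all inversion sets at `a`. -/
def posRe (a : G) : Set (R a) := ⋃ g : SHoms G a, S.PhiS g

/-- An atomic morphism: an atom of the weak order at its codomain. -/
def Atomic {a : G} (g : SHoms G a) : Prop :=
  S.PhiS g ≠ ∅ ∧ ∀ h : SHoms G a, S.PhiS h ⊆ S.PhiS g →
    S.PhiS h = ∅ ∨ S.PhiS h = S.PhiS g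

/-- A simple morphism: one whose inversion set is a singleton. -/
def Simple {a b : G} (f : b ⟶ a) : Prop := ∃ α : R a, S.Phi f = {α}

/-- Interval finiteness: every interval `[1ₐ, g]` of a weak order is finite. -/
def IntervalFinite : Prop :=
  ∀ (a : G) (g : SHoms G a), {h : SHoms G a | S.PhiS h ⊆ S.PhiS g}.Finite

/-- Preprincipal: interval finite, and the inversion set of an atomic morphism is
contained in, or disjoint from, any other inversion set at the same object. -/
def Preprincipal : Prop :=
  S.IntervalFinite ∧ ∀ (a : G) (s g : SHoms G a), S.Atomic s →
    S.PhiS s ⊆ S.PhiS g ∨ S.PhiS s ∩ S.PhiS g = ∅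

/-- Antipodal: the weak order at each object has a maximum element. -/
def Antipodal : Prop :=
  ∀ a : G, ∃ ω : SHoms G a, ∀ g : SHoms G a, S.PhiS g ⊆ S.PhiS ω

end SGS


namespace SGS

variable {G : Type u} [Groupoid G] {R : G → Type v} (S : SGS G R)

lemma ginv_ginv {a b : G} (f : b ⟶ a) : Groupoid.inv (Groupoid.inv f) = f := by
  simp [Groupoid.inv_eq_inv]

lemma act_inv_act {a b : G} (f : b ⟶ a) (β : R b) :
    S.act (Groupoid.inv f) (S.act f β) = β := by
  rw [S.act_comp, Groupoid.comp_inv, S.act_id]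

lemma act_act_inv {a b : G} (f : b ⟶ a) (α : R a) :
    S.act f (S.act (Groupoid.inv f) α) = α := by
  rw [S.act_comp, Groupoid.inv_comp, S.act_id]

lemma neg_mem_pos {a : G} (α : R a) : S.neg α ∈ S.pos a ↔ α ∉ S.pos a := by
  rw [S.pos_iff (S.neg α), S.neg_neg]

lemma mem_Phi_comp {a b c : G} (g : c ⟶ b) (f : b ⟶ a) (α : R a) :
    α ∈ S.Phi (g ≫ f) ↔ α ∈ S.pos a ∧
      S.act (Groupoid.inv g) (S.act (Groupoid.inv f) α) ∉ S.pos c := by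
  have h : Groupoid.inv (g ≫ f) = Groupoid.inv f ≫ Groupoid.inv g := by
    simp [Groupoid.inv_eq_inv]
  simp only [Phi, Set.mem_setOf_eq, h, ← S.act_comp]

lemma ub_pos {a b d : G} (x : b ⟶ d) (w : a ⟶ b)
    (h : S.Phi x ⊆ S.Phi (w ≫ x)) :
    ∀ γ ∈ S.Phi w, S.act x γ ∈ S.pos d := by
  intro γ hγ
  by_contra h0
  have hα : S.neg (S.act x γ) ∈ S.Phi x := by
    refine ⟨(S.neg_mem_pos _).mpr h0, ?_⟩
    rw [S.act_neg, S.act_inv_act]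
    exact (S.pos_iff γ).mp hγ.1
  have hm := (S.mem_Phi_comp w x _).mp (h hα)
  apply hm.2
  rw [S.act_neg, S.act_inv_act, S.act_neg]
  exact (S.neg_mem_pos _).mpr hγ.2

lemma square_union {a b c d : G} (x : b ⟶ d) (w : a ⟶ b) (y : c ⟶ d)
    (h : S.act x '' S.Phi w = S.Phi y) :
    S.Phi (w ≫ x) = S.Phi x ∪ S.Phi y := by
  ext α
  rw [S.mem_Phi_comp]
  constructor
  · rintro ⟨hpos, hneg⟩
    by_cases hb : S.act (Groupoid.inv x) α ∈ S.pos b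
    · right
      rw [← h]
      exact ⟨_, ⟨hb, hneg⟩, S.act_act_inv x α⟩
    · exact Or.inl ⟨hpos, hb⟩
  · rintro (hx | hy)
    · refine ⟨hx.1, fun hcon => ?_⟩
      have h1 : S.neg (S.act (Groupoid.inv x) α) ∈ S.Phi w := by
        refine ⟨(S.neg_mem_pos _).mpr hx.2, ?_⟩
        rw [S.act_neg]
        exact (S.pos_iff _).mp hcon
      have h2 : S.neg α ∈ S.Phi y := by
        rw [← h]
        refine ⟨_, h1, ?_⟩
        rw [S.act_neg, S.act_act_inv]
      exact (S.neg_mem_pos α).mp h2.1 hx.1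
    · have hα : α ∈ S.act x '' S.Phi w := h ▸ hy
      obtain ⟨γ, hγ, rfl⟩ := hα
      refine ⟨hy.1, ?_⟩
      rw [S.act_inv_act]
      exact hγ.2

end SGS

/-- `(x,w,y,z)` is a square iff `xw = yz`, `x ∨ y = xw` and
`x⁻¹ ∨ w = x⁻¹y` (joins in the weak orders at the relevant objects). -/
theorem stmt_9 {G : Type u} [Groupoid G] {R : G → Type v} (S : SGS G R)
    (hfa : S.Faithful) {a b c d : G}
    (x : b ⟶ d) (w : a ⟶ b) (y : c ⟶ d) (z : a ⟶ c) :
    S.Square x w y z ↔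
      (w ≫ x = z ≫ y ∧
       S.IsLUBw ({⟨b, x⟩, ⟨c, y⟩} : Set (SHoms G d)) ⟨a, w ≫ x⟩ ∧
       S.IsLUBw ({⟨d, Groupoid.inv x⟩, ⟨a, w⟩} : Set (SHoms G b))
         ⟨c, y ≫ Groupoid.inv x⟩) := by
  constructor
  · rintro ⟨hc, h⟩
    have h' : S.act (Groupoid.inv x) '' S.Phi y = S.Phi w := by
      rw [← h, ← Set.image_comp]
      have : (S.act (Groupoid.inv x) ∘ S.act x) '' S.Phi w = id '' S.Phi w := by
        apply Set.image_congr
        intro β _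
        exact S.act_inv_act x β
      rw [this, Set.image_id]
    have e1 : S.Phi (w ≫ x) = S.Phi x ∪ S.Phi y := S.square_union x w y h
    have e2 : S.Phi (y ≫ Groupoid.inv x) = S.Phi (Groupoid.inv x) ∪ S.Phi w :=
      S.square_union (Groupoid.inv x) y w h'
    refine ⟨hc, ⟨?_, ?_⟩, ⟨?_, ?_⟩⟩
    · rintro g hg
      rcases hg with rfl | hg
      · show S.Phi x ⊆ S.Phi (w ≫ x)
        rw [e1]; exact Set.subset_union_left
      · rcases hg with rfl
        show S.Phi y ⊆ S.Phi (w ≫ x)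
        rw [e1]; exact Set.subset_union_right
    · intro k hk
      show S.Phi (w ≫ x) ⊆ _
      rw [e1]
      exact Set.union_subset (hk ⟨b, x⟩ (Set.mem_insert _ _))
        (hk ⟨c, y⟩ (Set.mem_insert_of_mem _ rfl))
    · rintro g hg
      rcases hg with rfl | hg
      · show S.Phi (Groupoid.inv x) ⊆ S.Phi (y ≫ Groupoid.inv x)
        rw [e2]; exact Set.subset_union_left
      · rcases hg with rfl
        show S.Phi w ⊆ S.Phi (y ≫ Groupoid.inv x)
        rw [e2]; exact Set.subset_union_right
    · intro k hk
      show S.Phi (y ≫ Groupoid.inv x) ⊆ _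
      rw [e2]
      exact Set.union_subset (hk ⟨d, Groupoid.inv x⟩ (Set.mem_insert _ _))
        (hk ⟨a, w⟩ (Set.mem_insert_of_mem _ rfl))
  · rintro ⟨hc, ⟨hub1, -⟩, ⟨hub2, -⟩⟩
    refine ⟨hc, ?_⟩
    have hA : S.Phi x ⊆ S.Phi (w ≫ x) := hub1 ⟨b, x⟩ (Set.mem_insert _ _)
    have hB : S.Phi y ⊆ S.Phi (w ≫ x) := hub1 ⟨c, y⟩ (Set.mem_insert_of_mem _ rfl)
    have hC : S.Phi (Groupoid.inv x) ⊆ S.Phi (y ≫ Groupoid.inv x) :=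
      hub2 ⟨d, Groupoid.inv x⟩ (Set.mem_insert _ _)
    have hD : S.Phi w ⊆ S.Phi (y ≫ Groupoid.inv x) :=
      hub2 ⟨a, w⟩ (Set.mem_insert_of_mem _ rfl)
    have posA := S.ub_pos x w hA
    have posB := S.ub_pos (Groupoid.inv x) y hC
    apply Set.Subset.antisymm
    · rintro _ ⟨γ, hγ, rfl⟩
      have hm := (S.mem_Phi_comp y (Groupoid.inv x) γ).mp (hD hγ)
      refine ⟨posA γ hγ, ?_⟩
      have := hm.2
      rwa [SGS.ginv_ginv] at this
    · intro δ hδ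
      have hm := (S.mem_Phi_comp w x δ).mp (hB hδ)
      exact ⟨_, ⟨posB δ hδ, hm.2⟩, S.act_act_inv x δ⟩
end
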